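/- Let μ : [0,1] → ℝ be a probability density with μ ≥ c > 0 and μ ∈ C^α for an integer α ≥ 1, with ‖μ‖_{C^α} ≤ B. Then the inverse (F^μ)⁻¹ of the CDF F^μ belongs to C^{α+1}([0,1]), with a norm bound depending only on α, c, B. -/

import Mathlib

open MeasureTheory Set

lemma iteratedDeriv_inv_formula (n : ℕ) : ∀ u : ℝ, u ≠ 0 →
    iteratedDeriv n (fun x : ℝ => x⁻¹) u = (-1:ℝ)^n * (Nat.factorial n : ℝ) * u ^ (-1 - n : ℤ) := by
  induction n with
  | zero =>
    intro u hu
    simp [iteratedDeriv_zero, zpow_neg_one]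
  | succ n IH =>
    intro u hu
    rw [iteratedDeriv_succ]
    have hev : (iteratedDeriv n (fun x : ℝ => x⁻¹)) =ᶠ[nhds u]
        (fun x : ℝ => (-1:ℝ)^n * (Nat.factorial n : ℝ) * x ^ (-1 - n : ℤ)) := by
      filter_upwards [IsOpen.mem_nhds isOpen_compl_singleton hu] with x hx
      exact IH x hx
    rw [hev.deriv_eq]
    have h1 : HasDerivAt (fun x : ℝ => x ^ (-1 - n : ℤ))
        ((-1 - n : ℤ) * u ^ ((-1 - n : ℤ) - 1)) u := hasDerivAt_zpow _ _ (Or.inl hu)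
    have h2 := (h1.const_mul ((-1:ℝ)^n * (Nat.factorial n:ℝ))).deriv
    rw [h2]
    push_cast [Nat.factorial_succ, pow_succ]
    ring_nf

lemma iteratedDerivWithin_isOpen' {f : ℝ → ℝ} {s : Set ℝ} (hs : IsOpen s) {x : ℝ}
    (hx : x ∈ s) (n : ℕ) : iteratedDerivWithin n f s x = iteratedDeriv n f x := by
  rw [iteratedDerivWithin_eq_iteratedFDerivWithin, iteratedDeriv_eq_iteratedFDeriv,
    iteratedFDerivWithin_of_isOpen n hs hx]

lemma inv_iterated_bound {a : ℝ} (ha : 0 < a) (n : ℕ) {u c : ℝ} (hu : a < u)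
    (hc : 0 < c) (hcu : c ≤ u) :
    ‖iteratedDerivWithin n (fun x : ℝ => x⁻¹) (Ioi a) u‖
      ≤ (Nat.factorial n : ℝ) * (c ^ (n + 1))⁻¹ := by
  have hu0 : (0:ℝ) < u := ha.trans hu
  rw [iteratedDerivWithin_isOpen' isOpen_Ioi hu n,
    iteratedDeriv_inv_formula n u hu0.ne']
  have h1 : (-1 - n : ℤ) = -((n+1 : ℕ) : ℤ) := by push_cast; ring
  rw [h1, zpow_neg, zpow_natCast]
  rw [norm_mul, norm_mul]
  simp only [norm_pow, norm_neg, norm_one, one_pow, one_mul]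
  rw [Real.norm_natCast, norm_inv, Real.norm_of_nonneg (by positivity : (0:ℝ) ≤ u ^ (n+1))]
  gcongr

/-- Recursive bound sequence for derivatives of the inverse CDF. -/
noncomputable def mB (c B : ℝ) : ℕ → ℝ
  | 0 => max 1 c⁻¹
  | (i+1) => max (mB c B i)
      ((Nat.factorial (i+1) : ℝ) * ((Nat.factorial (i+1) : ℝ) * (max 1 c⁻¹)^(i+2)) *
        (max 1 ((Nat.factorial (i+1) : ℝ) * B * (mB c B i)^(i+1)))^(i+1))

lemma one_le_mB (c B : ℝ) : ∀ i, 1 ≤ mB c B i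
  | 0 => le_max_left _ _
  | (i+1) => le_trans (one_le_mB c B i) (le_max_left _ _)

lemma mB_mono (c B : ℝ) : Monotone (mB c B) :=
  monotone_nat_of_le_succ (fun i => le_max_left _ _)

theorem stmt3 (α : ℕ) (hα : 1 ≤ α) (c B : ℝ) (hc : 0 < c) (hB : 0 < B) :
    ∃ C > 0, ∀ μ : ℝ → ℝ,
      ContDiffOn ℝ α μ (Icc 0 1) →
      (∀ x ∈ Icc (0:ℝ) 1, c ≤ μ x) →
      (∀ x ∈ Icc (0:ℝ) 1,
        (∑ i ∈ Finset.range (α + 1), ‖iteratedDerivWithin i μ (Icc 0 1) x‖) ≤ B) →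
      (∫ y in (0:ℝ)..1, μ y) = 1 →
      ContDiffOn ℝ (α + 1)
        (Function.invFunOn (fun t => ∫ y in (0:ℝ)..t, μ y) (Icc 0 1)) (Icc 0 1) ∧
      ∀ i ≤ α + 1, ∀ x ∈ Icc (0:ℝ) 1,
        ‖iteratedDerivWithin i
          (Function.invFunOn (fun t => ∫ y in (0:ℝ)..t, μ y) (Icc 0 1)) (Icc 0 1) x‖ ≤ C := by
  refine ⟨mB c B α, lt_of_lt_of_le one_pos (one_le_mB c B α), ?_⟩
  intro μ hμ hcμ hBμ hint
  have hUD : UniqueDiffOn ℝ (Icc (0:ℝ) 1) := uniqueDiffOn_Icc one_pos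
  -- the projection onto [0,1]
  set p : ℝ → ℝ := fun x => max 0 (min 1 x) with hp
  have hpmem : ∀ x, p x ∈ Icc (0:ℝ) 1 :=
    fun x => ⟨le_max_left _ _, max_le zero_le_one (min_le_left _ _)⟩
  have hpcont : Continuous p := continuous_const.max (continuous_const.min continuous_id)
  have hpeq : ∀ x ∈ Icc (0:ℝ) 1, p x = x := by
    intro x hx
    simp only [hp]
    rw [min_eq_right hx.2, max_eq_right hx.1]
  -- the modified density
  set ν : ℝ → ℝ := fun x => μ (p x) with hν
  have hνcont : Continuous ν := hμ.continuousOn.comp_continuous hpcont hpmem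
  have hνeq : Set.EqOn ν μ (Icc (0:ℝ) 1) := fun x hx => by simp only [hν, hpeq x hx]
  have hνc : ∀ x, c ≤ ν x := fun x => hcμ _ (hpmem x)
  have hνpos : ∀ x, 0 < ν x := fun x => lt_of_lt_of_le hc (hνc x)
  have hνCD : ContDiffOn ℝ α ν (Icc (0:ℝ) 1) := hμ.congr hνeq
  -- the modified CDF
  set F : ℝ → ℝ := fun t => ∫ y in (0:ℝ)..t, ν y with hF
  have hFd : ∀ t, HasDerivAt F (ν t) t :=
    fun t => (hνcont.integral_hasStrictDerivAt 0 t).hasDerivAt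
  have hFcont : Continuous F :=
    continuous_iff_continuousAt.2 fun t => (hFd t).continuousAt
  have hFmono : StrictMono F := by
    apply strictMono_of_deriv_pos
    intro x
    rw [(hFd x).deriv]
    exact hνpos x
  have hF0 : F 0 = 0 := intervalIntegral.integral_same
  have hF1 : F 1 = 1 := by
    have h9 : F 1 = ∫ y in (0:ℝ)..1, μ y := by
      apply intervalIntegral.integral_congr
      rw [uIcc_of_le zero_le_one]
      exact hνeq
    rw [h9, hint]
  have hFmaps : Set.MapsTo F (Icc (0:ℝ) 1) (Icc (0:ℝ) 1) := by
    intro x hx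
    constructor
    · rw [← hF0]; exact hFmono.monotone hx.1
    · rw [← hF1]; exact hFmono.monotone hx.2
  have hFsurj : Icc (0:ℝ) 1 ⊆ F '' (Icc (0:ℝ) 1) := by
    have := intermediate_value_Icc (zero_le_one (α := ℝ)) hFcont.continuousOn
    rw [hF0, hF1] at this
    exact this
  -- the inverse function
  set g : ℝ → ℝ := Function.invFunOn F (Icc (0:ℝ) 1) with hgdef
  have hFF : ∀ a ∈ Icc (0:ℝ) 1, (∫ y in (0:ℝ)..a, μ y) = F a := by
    intro a ha
    apply intervalIntegral.integral_congr
    intro y hy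
    rw [uIcc_of_le ha.1] at hy
    exact (hνeq ⟨hy.1, le_trans hy.2 ha.2⟩).symm
  have hgeq : Function.invFunOn (fun t => ∫ y in (0:ℝ)..t, μ y) (Icc (0:ℝ) 1) = g := by
    funext b
    by_cases hb : ∃ a ∈ Icc (0:ℝ) 1, F a = b
    · have hb' : ∃ a ∈ Icc (0:ℝ) 1, (∫ y in (0:ℝ)..a, μ y) = b := by
        obtain ⟨a, ha, hab⟩ := hb
        exact ⟨a, ha, (hFF a ha).trans hab⟩
      have m1 := Function.invFunOn_mem hb'
      have e1 := Function.invFunOn_eq hb'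
      have m2 := Function.invFunOn_mem hb
      have e2 := Function.invFunOn_eq hb
      apply hFmono.injective.injOn m1 m2
      rw [← hFF _ m1, e1, e2]
    · have hb' : ¬ ∃ a ∈ Icc (0:ℝ) 1, (∫ y in (0:ℝ)..a, μ y) = b := by
        intro ⟨a, ha, hab⟩
        exact hb ⟨a, ha, ((hFF a ha).symm.trans hab : F a = b)⟩
      rw [hgdef, Function.invFunOn_neg hb', Function.invFunOn_neg hb]
  rw [hgeq]
  -- basic properties of g
  have hmemg : ∀ y ∈ Icc (0:ℝ) 1, g y ∈ Icc (0:ℝ) 1 ∧ F (g y) = y := by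
    intro y hy
    obtain ⟨x, hx, hxy⟩ := hFsurj hy
    exact Function.invFunOn_pos ⟨x, hx, hxy⟩
  have hgF : ∀ x ∈ Icc (0:ℝ) 1, g (F x) = x :=
    fun x hx => hFmono.injective.injOn.leftInvOn_invFunOn hx
  have hgmaps : Set.MapsTo g (Icc (0:ℝ) 1) (Icc (0:ℝ) 1) := fun y hy => (hmemg y hy).1
  -- continuity of g on [0,1]
  have hgcont : ContinuousOn g (Icc (0:ℝ) 1) := by
    let e : (Icc (0:ℝ) 1) ≃ (Icc (0:ℝ) 1) :=
      { toFun := fun x => ⟨F x, hFmaps x.2⟩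
        invFun := fun y => ⟨g y, (hmemg y y.2).1⟩
        left_inv := fun x => Subtype.ext (hgF x x.2)
        right_inv := fun y => Subtype.ext ((hmemg y y.2).2) }
    have hce : Continuous e := Continuous.subtype_mk (hFcont.comp continuous_subtype_val) _
    let homeo := hce.homeoOfEquivCompactToT2
    rw [continuousOn_iff_continuous_restrict]
    exact continuous_subtype_val.comp homeo.symm.continuous
  -- derivative of g within [0,1]
  have hder : ∀ y ∈ Icc (0:ℝ) 1, HasDerivWithinAt g (ν (g y))⁻¹ (Icc (0:ℝ) 1) y := by
    intro y hy
    obtain ⟨hgy, hFgy⟩ := hmemg y hy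
    have hFd' : HasDerivWithinAt F (ν (g y)) (Icc (0:ℝ) 1) (g y) := (hFd _).hasDerivWithinAt
    rw [hasDerivWithinAt_iff_tendsto_slope] at hFd' ⊢
    have htg : Filter.Tendsto g (nhdsWithin y (Icc (0:ℝ) 1 \ {y}))
        (nhdsWithin (g y) (Icc (0:ℝ) 1 \ {g y})) := by
      rw [tendsto_nhdsWithin_iff]
      constructor
      · exact (hgcont y hy).mono_left (nhdsWithin_mono y diff_subset)
      · filter_upwards [self_mem_nhdsWithin] with z hz
        refine ⟨(hmemg z hz.1).1, ?_⟩
        intro hzz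
        apply hz.2
        have : F (g z) = F (g y) := by rw [hzz]
        rw [(hmemg z hz.1).2, hFgy] at this
        exact this
    have hcomp := (hFd'.comp htg :)
    have hconv : Filter.Tendsto (fun u : ℝ => u⁻¹) (nhds (ν (g y))) (nhds (ν (g y))⁻¹) :=
      (continuousAt_inv₀ (ne_of_gt (hνpos _))).tendsto
    have := hconv.comp hcomp
    apply this.congr'
    filter_upwards [self_mem_nhdsWithin] with z hz
    have hFz : F (g z) = z := (hmemg z hz.1).2
    simp only [Function.comp_apply, slope_def_field]
    rw [hFz, hFgy, inv_div]
  have hderiv_eq : ∀ y ∈ Icc (0:ℝ) 1, derivWithin g (Icc (0:ℝ) 1) y = (ν (g y))⁻¹ :=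
    fun y hy => (hder y hy).derivWithin (hUD y hy)
  have hgdiff : DifferentiableOn ℝ g (Icc (0:ℝ) 1) :=
    fun y hy => (hder y hy).differentiableWithinAt
  -- smoothness of g
  have hsmooth : ∀ k : ℕ, k ≤ α + 1 → ContDiffOn ℝ k g (Icc (0:ℝ) 1) := by
    intro k
    induction k with
    | zero => exact fun _ => contDiffOn_zero.mpr hgcont
    | succ k IH =>
      intro hk
      have hk' : k ≤ α := by omega
      have hgk := IH (by omega)
      rw [show ((k+1 : ℕ) : WithTop ℕ∞) = (k : WithTop ℕ∞) + 1 by norm_cast]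
      rw [contDiffOn_succ_iff_derivWithin hUD]
      refine ⟨hgdiff, by simp, ?_⟩
      have hcd : ContDiffOn ℝ k (fun y => (ν (g y))⁻¹) (Icc (0:ℝ) 1) :=
        ((hνCD.of_le (by exact_mod_cast hk')).comp hgk hgmaps).inv
          (fun y hy => ne_of_gt (hνpos _))
      exact hcd.congr (fun y hy => hderiv_eq y hy)
  constructor
  · exact hsmooth (α + 1) le_rfl
  -- the bounds
  have key : ∀ j, j ≤ α + 1 → ∀ x ∈ Icc (0:ℝ) 1,
      ‖iteratedDerivWithin j g (Icc (0:ℝ) 1) x‖ ≤ mB c B (j - 1) := by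
    intro j
    induction j using Nat.strong_induction_on with
    | _ j IH =>
      match j with
      | 0 =>
        intro _ x hx
        rw [iteratedDerivWithin_zero]
        calc ‖g x‖ ≤ 1 := by
              rw [Real.norm_eq_abs, abs_le]
              exact ⟨le_trans (by norm_num) (hgmaps hx).1, (hgmaps hx).2⟩
          _ ≤ mB c B (0 - 1) := one_le_mB c B _
      | 1 =>
        intro _ x hx
        rw [iteratedDerivWithin_one, hderiv_eq x hx]
        have h1 : ‖(ν (g x))⁻¹‖ = (ν (g x))⁻¹ :=
          Real.norm_of_nonneg (inv_nonneg.2 (hνpos _).le)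
        rw [h1]
        calc (ν (g x))⁻¹ ≤ c⁻¹ := by
              apply inv_anti₀ hc (hνc _)
          _ ≤ mB c B (1 - 1) := le_max_right _ _
      | (i+2) =>
        intro hj x hx
        have hiα : i + 1 ≤ α := by omega
        have e1 : iteratedDerivWithin (i+2) g (Icc (0:ℝ) 1) x
            = iteratedDerivWithin (i+1) ((fun u : ℝ => u⁻¹) ∘ (ν ∘ g)) (Icc (0:ℝ) 1) x := by
          rw [iteratedDerivWithin_succ']
          exact iteratedDerivWithin_congr (fun y hy => hderiv_eq y hy) hx
        rw [e1, ← norm_iteratedFDerivWithin_eq_norm_iteratedDerivWithin]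
        have hgα : ContDiffOn ℝ α g (Icc (0:ℝ) 1) := hsmooth α (by omega)
        have hνg : ContDiffOn ℝ α (ν ∘ g) (Icc (0:ℝ) 1) := hνCD.comp hgα hgmaps
        have hinv : ContDiffOn ℝ α (fun u : ℝ => u⁻¹) (Ioi (c/2)) := by
          apply ContDiffOn.inv contDiffOn_id
          intro u hu
          exact ne_of_gt (lt_trans (half_pos hc) hu)
        have hmapsνg : Set.MapsTo (ν ∘ g) (Icc (0:ℝ) 1) (Ioi (c/2)) := by
          intro y hy
          exact lt_of_lt_of_le (half_lt_self hc) (hνc _)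
        have hCinv : ∀ l ≤ i + 1,
            ‖iteratedFDerivWithin ℝ l (fun u : ℝ => u⁻¹) (Ioi (c/2)) ((ν ∘ g) x)‖
              ≤ (Nat.factorial (i+1) : ℝ) * (max 1 c⁻¹)^(i+2) := by
          intro l hl
          rw [norm_iteratedFDerivWithin_eq_norm_iteratedDerivWithin]
          have h2 := inv_iterated_bound (half_pos hc) l
            (lt_of_lt_of_le (half_lt_self hc) (hνc (g x))) hc (hνc (g x))
          refine le_trans h2 ?_
          have hfl : (Nat.factorial l : ℝ) ≤ (Nat.factorial (i+1) : ℝ) :=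
            Nat.cast_le.2 (Nat.factorial_le hl)
          have hcl : (c ^ (l+1))⁻¹ ≤ (max 1 c⁻¹)^(i+2) := by
            rw [← inv_pow]
            refine le_trans (pow_le_pow_left₀ (inv_nonneg.2 hc.le) (le_max_right 1 c⁻¹) (l+1)) ?_
            apply pow_le_pow_right₀ (le_max_left _ _)
            omega
          exact mul_le_mul hfl hcl (by positivity) (by positivity)
        have hCν : ∀ m ≤ i + 1, ‖iteratedFDerivWithin ℝ m ν (Icc (0:ℝ) 1) (g x)‖ ≤ B := by
          intro m hm
          rw [norm_iteratedFDerivWithin_eq_norm_iteratedDerivWithin]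
          have hgx : g x ∈ Icc (0:ℝ) 1 := hgmaps hx
          have hcongr : iteratedDerivWithin m ν (Icc (0:ℝ) 1) (g x)
              = iteratedDerivWithin m μ (Icc (0:ℝ) 1) (g x) :=
            iteratedDerivWithin_congr hνeq hgx
          rw [hcongr]
          refine le_trans ?_ (hBμ (g x) hgx)
          apply Finset.single_le_sum
            (f := fun i => ‖iteratedDerivWithin i μ (Icc (0:ℝ) 1) (g x)‖)
            (fun i _ => norm_nonneg _)
          rw [Finset.mem_range]
          omega
        have hDg : ∀ m, 1 ≤ m → m ≤ i + 1 →
            ‖iteratedFDerivWithin ℝ m g (Icc (0:ℝ) 1) x‖ ≤ (mB c B i) ^ m := by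
          intro m hm1 hm
          rw [norm_iteratedFDerivWithin_eq_norm_iteratedDerivWithin]
          refine le_trans (IH m (by omega) (by omega) x hx) ?_
          refine le_trans (mB_mono c B (show m - 1 ≤ i by omega)) ?_
          exact le_self_pow₀ (one_le_mB c B i) (by omega)
        have hDνg : ∀ l, 1 ≤ l → l ≤ i + 1 →
            ‖iteratedFDerivWithin ℝ l (ν ∘ g) (Icc (0:ℝ) 1) x‖
              ≤ (max 1 ((Nat.factorial (i+1) : ℝ) * B * (mB c B i)^(i+1))) ^ l := by
          intro l hl1 hl
          have hbound2 := norm_iteratedFDerivWithin_comp_le (𝕜 := ℝ) hνCD hgα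
            (by exact_mod_cast (le_trans hl hiα)) hUD hUD hgmaps hx
            (C := B) (D := mB c B i) (fun m hm => hCν m (le_trans hm hl))
            (fun m hm1 hm => hDg m hm1 (le_trans hm hl))
          refine le_trans hbound2 ?_
          have h3 : (Nat.factorial l : ℝ) * B * (mB c B i)^l
              ≤ (Nat.factorial (i+1) : ℝ) * B * (mB c B i)^(i+1) := by
            apply mul_le_mul
            · exact mul_le_mul (Nat.cast_le.2 (Nat.factorial_le hl)) le_rfl hB.le
                (by positivity)
            · exact pow_le_pow_right₀ (one_le_mB c B i) hl
            · exact pow_nonneg (le_trans zero_le_one (one_le_mB c B i)) _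
            · positivity
          refine le_trans h3 ?_
          refine le_trans (le_max_right 1 _) ?_
          exact le_self_pow₀ (le_max_left _ _) (by omega)
        have hbound := norm_iteratedFDerivWithin_comp_le (𝕜 := ℝ) hinv hνg
          (by exact_mod_cast hiα) isOpen_Ioi.uniqueDiffOn hUD hmapsνg hx
          (C := (Nat.factorial (i+1) : ℝ) * (max 1 c⁻¹)^(i+2))
          (D := max 1 ((Nat.factorial (i+1) : ℝ) * B * (mB c B i)^(i+1)))
          hCinv hDνg
        refine le_trans hbound (le_trans (le_max_right _ _) (le_of_eq rfl))
  intro i hi x hx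
  refine le_trans (key i hi x hx) (mB_mono c B (by omega))
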